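/- arXiv:1504.06360 — 3 statements merged into one kernel-verified Lean document; each statement's English description precedes it below -/
import Mathlib

section
/- Let C be a p×p Hermitian matrix, z ∈ ℂ with Im(z) > 0, and write C = Σ_{k=1}^p e_k h_k*, where h_k* is the k-th row of C. Suppose for each k that R_k(z) := (D_k - zI)⁻¹ exists, where D_k is C with its k-th row replaced by zeros, and that 1 + h_k* R_k(z) e_k ≠ 0. Then the Stieltjes transform s(z) = (1/p) Tr((C - zI)⁻¹) satisfies s(z) = -(1/(z p)) Σ_{k=1}^p 1/(1 + h_k* R_k(z) e_k). -/
open Matrix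

/-- Row-by-row resolvent expansion of the Stieltjes transform: writing `C = ∑ₖ eₖ hₖ*`
with `hₖ*` the `k`-th row of `C`, and `Dₖ` the matrix `C` with its `k`-th row zeroed out,
the Stieltjes transform `s(z) = (1/p) Tr((C - zI)⁻¹)` satisfies
`s(z) = -(1/(zp)) ∑ₖ 1/(1 + hₖ* Rₖ(z) eₖ)`. -/
theorem stieltjes_rowwise_decomposition (p : ℕ) (C : Matrix (Fin p) (Fin p) ℂ)
    (hC : C.IsHermitian) (z : ℂ) (hz : 0 < z.im)
    (D : Fin p → Matrix (Fin p) (Fin p) ℂ)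
    (hD : ∀ k i j, D k i j = if i = k then 0 else C i j)
    (hinv : ∀ k, IsUnit (D k - z • (1 : Matrix (Fin p) (Fin p) ℂ)).det)
    (hden : ∀ k, 1 + (fun j => C k j) ⬝ᵥ
      ((D k - z • (1 : Matrix (Fin p) (Fin p) ℂ))⁻¹ *ᵥ Pi.single k 1) ≠ 0) :
    (1 / p : ℂ) * Matrix.trace ((C - z • (1 : Matrix (Fin p) (Fin p) ℂ))⁻¹) =
      -(1 / (z * p)) * ∑ k, (1 + (fun j => C k j) ⬝ᵥ
        ((D k - z • (1 : Matrix (Fin p) (Fin p) ℂ))⁻¹ *ᵥ Pi.single k 1))⁻¹ := by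
  have hzne : z ≠ 0 := by
    intro h; rw [h] at hz; simp at hz
  set A : Matrix (Fin p) (Fin p) ℂ := C - z • 1 with hA
  set B : Fin p → Matrix (Fin p) (Fin p) ℂ := fun k => D k - z • 1 with hB
  set r : Fin p → Fin p → ℂ := fun k => (B k)⁻¹ *ᵥ (Pi.single k 1 : Fin p → ℂ) with hr
  set d : Fin p → ℂ := fun k => (fun j => C k j) ⬝ᵥ r k with hd
  set x : Fin p → Fin p → ℂ := fun k => (1 + d k)⁻¹ • r k with hx
  have hBinv : ∀ k, B k * (B k)⁻¹ = 1 := fun k => mul_nonsing_inv _ (hinv k)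
  -- decomposition of A
  have hAdec : ∀ k, A = B k + vecMulVec ((Pi.single k 1 : Fin p → ℂ)) (fun j => C k j) := by
    intro k
    ext i j
    by_cases h : i = k <;>
      simp [hA, hB, hD, vecMulVec_apply, Pi.single_apply, h, Matrix.sub_apply,
        Matrix.smul_apply, one_apply, add_comm] <;> ring
  -- A *ᵥ x k = e_k
  have hAx : ∀ k, A *ᵥ x k = (Pi.single k 1 : Fin p → ℂ) := by
    intro k
    rw [hAdec k, add_mulVec]
    have h1 : B k *ᵥ x k = (1 + d k)⁻¹ • (Pi.single k 1 : Fin p → ℂ) := by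
      rw [hx]
      simp only [mulVec_smul, hr, mulVec_mulVec, hBinv k, one_mulVec]
    have h2 : vecMulVec ((Pi.single k 1 : Fin p → ℂ)) (fun j => C k j) *ᵥ x k
        = ((1 + d k)⁻¹ * d k) • (Pi.single k 1 : Fin p → ℂ) := by
      ext i
      simp [vecMulVec, mulVec, dotProduct, Finset.mul_sum, hx, hd, hr]
      ring_nf
      rw [Finset.mul_sum]
      congr 1
      ext j
      ring
    rw [h1, h2, ← add_smul]
    rw [← mul_one_add, inv_mul_cancel₀ (hden k), one_smul]
  -- X is a right inverse of A
  set X : Matrix (Fin p) (Fin p) ℂ := Matrix.of (fun i j => x j i) with hX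
  have hAX : A * X = 1 := by
    ext i j
    have := congrFun (hAx j) i
    simp only [mulVec, dotProduct] at this
    simp only [mul_apply, hX, Matrix.of_apply, one_apply]
    rw [this]
    by_cases h : i = j <;> simp [Pi.single_apply, h, eq_comm]
  have hAinv : A⁻¹ = X := Matrix.inv_eq_right_inv hAX
  -- diagonal of B k inverse
  have hrk : ∀ k, r k k = -z⁻¹ := by
    intro k
    have hrow : (Pi.single k 1 : Fin p → ℂ) ᵥ* B k = (-z) • (Pi.single k 1 : Fin p → ℂ) := by
      ext j
      by_cases h : k = j <;>
        simp [hB, hD, Matrix.sub_apply, Matrix.smul_apply, one_apply, Pi.single_apply, h, eq_comm]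
    have hrowinv : (Pi.single k 1 : Fin p → ℂ) ᵥ* (B k)⁻¹ = (-z)⁻¹ • (Pi.single k 1 : Fin p → ℂ) := by
      have h1 : ((Pi.single k 1 : Fin p → ℂ) ᵥ* B k) ᵥ* (B k)⁻¹ = (Pi.single k 1 : Fin p → ℂ) := by
        rw [vecMul_vecMul, hBinv k, vecMul_one]
      rw [hrow, smul_vecMul] at h1
      have hz' : (-z) ≠ 0 := neg_ne_zero.mpr hzne
      calc (Pi.single k 1 : Fin p → ℂ) ᵥ* (B k)⁻¹
          = (-z)⁻¹ • ((-z) • ((Pi.single k 1 : Fin p → ℂ) ᵥ* (B k)⁻¹)) := by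
            rw [smul_smul, inv_mul_cancel₀ hz', one_smul]
        _ = (-z)⁻¹ • (Pi.single k 1 : Fin p → ℂ) := by rw [h1]
    have : r k k = ((Pi.single k 1 : Fin p → ℂ) ᵥ* (B k)⁻¹) ⬝ᵥ (Pi.single k 1 : Fin p → ℂ) := by
      rw [hr]
      simp only [← dotProduct_mulVec]
      rw [single_dotProduct, one_mul]
    rw [this, hrowinv]
    simp [inv_neg]
  -- compute the trace
  have htr : Matrix.trace A⁻¹ = ∑ k, (-z⁻¹) * (1 + d k)⁻¹ := by
    rw [hAinv, Matrix.trace]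
    congr 1
    ext k
    simp only [Matrix.diag_apply, hX, Matrix.of_apply, hx, Pi.smul_apply, smul_eq_mul]
    rw [hrk k]
    ring
  rw [htr, Finset.mul_sum, Finset.mul_sum]
  congr 1
  ext k
  rw [one_div, one_div, mul_inv]
  push_cast
  ring
end

section
/- Let A and B be p×p Hermitian matrices with empirical spectral distributions F^A and F^B (F^A(x) = (1/p)·#{eigenvalues of A that are ≤ x}, counted with multiplicity). Then sup_x |F^A(x) - F^B(x)| ≤ (1/p)·rank(A - B). -/
open Matrix Finset
open scoped InnerProductSpace
set_option maxHeartbeats 1000000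

lemma coeff_zero {p : ℕ} (e : OrthonormalBasis (Fin p) ℂ (EuclideanSpace ℂ (Fin p)))
    (P : Fin p → Prop) (v : EuclideanSpace ℂ (Fin p))
    (hv : v ∈ Submodule.span ℂ (Set.range fun i : {i // P i} => e i))
    (j : Fin p) (hj : ¬ P j) : ⟪e j, v⟫_ℂ = 0 := by
  have : Submodule.span ℂ (Set.range fun i : {i // P i} => e i) ≤
      LinearMap.ker (innerSL ℂ (e j)).toLinearMap := by
    rw [Submodule.span_le]
    rintro _ ⟨i, rfl⟩
    have hne : j ≠ (i : Fin p) := fun h => hj (h ▸ i.2)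
    simpa [LinearMap.mem_ker] using e.orthonormal.2 hne
  simpa using this hv

lemma quad_form {p : ℕ} {M : Matrix (Fin p) (Fin p) ℂ} (hM : M.IsHermitian)
    (v : EuclideanSpace ℂ (Fin p)) :
    Complex.re ⟪v, Matrix.toEuclideanLin M v⟫_ℂ =
      ∑ i, hM.eigenvalues i * ‖⟪hM.eigenvectorBasis i, v⟫_ℂ‖^2 := by
  have hsym := (Matrix.isHermitian_iff_isSymmetric.1 hM)
  have heig : ∀ i, Matrix.toEuclideanLin M (hM.eigenvectorBasis i) =
      (hM.eigenvalues i : ℂ) • (hM.eigenvectorBasis i : EuclideanSpace ℂ (Fin p)) := by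
    intro i; ext j
    simp [Matrix.toEuclideanLin_apply, hM.mulVec_eigenvectorBasis i]
  have h1 : ⟪v, Matrix.toEuclideanLin M v⟫_ℂ =
      ∑ i, ((hM.eigenvalues i : ℂ) * (‖⟪hM.eigenvectorBasis i, v⟫_ℂ‖^2 : ℝ)) := by
    rw [← (hM.eigenvectorBasis).sum_inner_mul_inner v (Matrix.toEuclideanLin M v)]
    refine Finset.sum_congr rfl fun i _ => ?_
    have h2 : ⟪(hM.eigenvectorBasis i : EuclideanSpace ℂ (Fin p)),
        Matrix.toEuclideanLin M v⟫_ℂ = (hM.eigenvalues i : ℂ) * ⟪hM.eigenvectorBasis i, v⟫_ℂ := by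
      rw [← hsym (hM.eigenvectorBasis i) v, heig i, inner_smul_left]
      simp
    rw [h2, ← inner_conj_symm v (hM.eigenvectorBasis i), mul_left_comm, RCLike.conj_mul]
    norm_cast
    exact (Complex.ofReal_mul _ _).symm
  rw [h1, Complex.re_sum]
  refine Finset.sum_congr rfl fun i _ => ?_
  rw [← Complex.ofReal_mul]
  exact Complex.ofReal_re _

lemma norm_sq_form {p : ℕ} (e : OrthonormalBasis (Fin p) ℂ (EuclideanSpace ℂ (Fin p)))
    (v : EuclideanSpace ℂ (Fin p)) :
    ‖v‖^2 = ∑ i, ‖⟪e i, v⟫_ℂ‖^2 := by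
  have h := e.sum_inner_mul_inner v v
  have h2 : ∑ i, (⟪v, e i⟫_ℂ * ⟪e i, v⟫_ℂ) = ∑ i, ((‖⟪e i, v⟫_ℂ‖^2 : ℝ) : ℂ) := by
    refine Finset.sum_congr rfl fun i _ => ?_
    rw [← inner_conj_symm v (e i), RCLike.conj_mul]
    norm_cast
  rw [norm_sq_eq_re_inner (𝕜 := ℂ), ← h, h2, map_sum]
  exact Finset.sum_congr rfl fun i _ => RCLike.ofReal_re _
lemma key_count {p : ℕ} (A B : Matrix (Fin p) (Fin p) ℂ)
    (hA : A.IsHermitian) (hB : B.IsHermitian) (x : ℝ) :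
    (Finset.univ.filter fun i => hA.eigenvalues i ≤ x).card ≤
      (Finset.univ.filter fun i => hB.eigenvalues i ≤ x).card + (A - B).rank := by
  classical
  set eA := hA.eigenvectorBasis
  set eB := hB.eigenvectorBasis
  set U : Submodule ℂ (EuclideanSpace ℂ (Fin p)) :=
    Submodule.span ℂ (Set.range fun i : {i : Fin p // hA.eigenvalues i ≤ x} => eA i) with hU
  set V : Submodule ℂ (EuclideanSpace ℂ (Fin p)) :=
    Submodule.span ℂ (Set.range fun i : {i : Fin p // x < hB.eigenvalues i} => eB i) with hV
  set T : EuclideanSpace ℂ (Fin p) →ₗ[ℂ] EuclideanSpace ℂ (Fin p) :=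
    Matrix.toEuclideanLin (A - B) with hT
  set W : Submodule ℂ (EuclideanSpace ℂ (Fin p)) := LinearMap.ker T with hW
  -- dimensions
  have hdimU : Module.finrank ℂ U =
      (Finset.univ.filter fun i => hA.eigenvalues i ≤ x).card := by
    have h := finrank_span_eq_card
      ((eA.orthonormal.linearIndependent).comp (Subtype.val : {i : Fin p // hA.eigenvalues i ≤ x} → Fin p) Subtype.val_injective)
    rw [hU]
    refine h.trans ?_
    simp [Fintype.card_subtype]
  have hdimV : Module.finrank ℂ V =
      (Finset.univ.filter fun i => x < hB.eigenvalues i).card := by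
    have h := finrank_span_eq_card
      ((eB.orthonormal.linearIndependent).comp (Subtype.val : {i : Fin p // x < hB.eigenvalues i} → Fin p) Subtype.val_injective)
    rw [hV]
    refine h.trans ?_
    simp [Fintype.card_subtype]
  have hcardB : (Finset.univ.filter fun i => hB.eigenvalues i ≤ x).card
      + (Finset.univ.filter fun i => x < hB.eigenvalues i).card = p := by
    have := Finset.card_filter_add_card_filter_not
      (s := (Finset.univ : Finset (Fin p))) (p := fun i => hB.eigenvalues i ≤ x)
    simpa [not_le] using this
  have hrank : (A - B).rank = Module.finrank ℂ (LinearMap.range T) := by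
    rw [Matrix.rank_eq_finrank_range_toLin (A - B)
      (PiLp.basisFun 2 ℂ (Fin p)) (PiLp.basisFun 2 ℂ (Fin p)), hT,
      Matrix.toEuclideanLin_eq_toLin]
  have hrn : Module.finrank ℂ (LinearMap.range T) + Module.finrank ℂ W = p := by
    rw [hW]
    rw [LinearMap.finrank_range_add_finrank_ker T]
    simp [finrank_euclideanSpace]
  -- trivial intersection
  have htriv : U ⊓ V ⊓ W = ⊥ := by
    rw [Submodule.eq_bot_iff]
    rintro v ⟨⟨hvU, hvV⟩, hvW⟩
    by_contra hv0
    have hnorm : (0 : ℝ) < ‖v‖^2 := pow_pos (norm_pos_iff.mpr hv0) 2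
    have hNA : ‖v‖^2 = ∑ i, ‖⟪eA i, v⟫_ℂ‖^2 := norm_sq_form eA v
    have hNB : ‖v‖^2 = ∑ i, ‖⟪eB i, v⟫_ℂ‖^2 := norm_sq_form eB v
    have hQA : Complex.re ⟪v, Matrix.toEuclideanLin A v⟫_ℂ ≤ x * ‖v‖^2 := by
      rw [quad_form hA v, hNA, Finset.mul_sum]
      refine Finset.sum_le_sum fun i _ => ?_
      by_cases hP : hA.eigenvalues i ≤ x
      · exact mul_le_mul_of_nonneg_right hP (sq_nonneg _)
      · rw [coeff_zero eA _ v hvU i hP]; simp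
    have hQB : x * ‖v‖^2 < Complex.re ⟪v, Matrix.toEuclideanLin B v⟫_ℂ := by
      rw [quad_form hB v, hNB, Finset.mul_sum]
      have hex : ∃ i ∈ Finset.univ, ⟪eB i, v⟫_ℂ ≠ 0 := by
        by_contra hall
        push_neg at hall
        rw [hNB] at hnorm
        have : ∑ i, ‖⟪eB i, v⟫_ℂ‖^2 = 0 :=
          Finset.sum_eq_zero fun i _ => by rw [hall i (Finset.mem_univ i)]; simp
        linarith
      obtain ⟨i0, -, hi0⟩ := hex
      have hgt : x < hB.eigenvalues i0 := by
        by_contra h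
        exact hi0 (coeff_zero eB _ v hvV i0 h)
      refine Finset.sum_lt_sum (fun i _ => ?_) ⟨i0, Finset.mem_univ i0, ?_⟩
      · by_cases hc : ⟪eB i, v⟫_ℂ = 0
        · rw [hc]; simp
        · have : x < hB.eigenvalues i := by
            by_contra h; exact hc (coeff_zero eB _ v hvV i h)
          exact mul_le_mul_of_nonneg_right this.le (sq_nonneg _)
      · have hpos : 0 < ‖⟪eB i0, v⟫_ℂ‖^2 := pow_pos (norm_pos_iff.mpr hi0) 2
        exact (mul_lt_mul_of_pos_right hgt hpos)
    have hAB : Matrix.toEuclideanLin A v = Matrix.toEuclideanLin B v := by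
      have h0 : T v = 0 := hvW
      rw [hT, map_sub, LinearMap.sub_apply] at h0
      exact sub_eq_zero.mp h0
    rw [hAB] at hQA
    linarith
  -- dimension counting
  have h1 := Submodule.finrank_sup_add_finrank_inf_eq U V
  have h2 := Submodule.finrank_sup_add_finrank_inf_eq (U ⊓ V) W
  have hb1 : Module.finrank ℂ ((U ⊔ V : Submodule ℂ (EuclideanSpace ℂ (Fin p)))) ≤ p := by
    simpa [finrank_euclideanSpace] using Submodule.finrank_le (U ⊔ V)
  have hb2 : Module.finrank ℂ (((U ⊓ V) ⊔ W : Submodule ℂ (EuclideanSpace ℂ (Fin p)))) ≤ p := by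
    simpa [finrank_euclideanSpace] using Submodule.finrank_le ((U ⊓ V) ⊔ W)
  have h0 : Module.finrank ℂ ((U ⊓ V ⊓ W : Submodule ℂ (EuclideanSpace ℂ (Fin p)))) = 0 := by
    rw [htriv]; exact finrank_bot ℂ _
  omega

lemma rank_sub_comm {p : ℕ} (A B : Matrix (Fin p) (Fin p) ℂ) :
    (B - A).rank = (A - B).rank := by
  have h : B - A = -(A - B) := (neg_sub A B).symm
  rw [h]
  have hr : LinearMap.range (-(A - B)).mulVecLin = LinearMap.range (A - B).mulVecLin := by
    rw [show (-(A - B)).mulVecLin = -((A - B).mulVecLin) by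
      ext v i; simp [Matrix.neg_mulVec], LinearMap.range_neg]
  rw [Matrix.rank, Matrix.rank, hr]

/-- Rank inequality for empirical spectral distributions of Hermitian matrices:
`sup_x |F^A(x) - F^B(x)| ≤ rank(A - B)/p`. -/
theorem esd_rank_inequality (p : ℕ) (A B : Matrix (Fin p) (Fin p) ℂ)
    (hA : A.IsHermitian) (hB : B.IsHermitian) :
    ∀ x : ℝ,
      |((Finset.univ.filter fun i => hA.eigenvalues i ≤ x).card : ℝ) / p -
        ((Finset.univ.filter fun i => hB.eigenvalues i ≤ x).card : ℝ) / p| ≤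
      ((A - B).rank : ℝ) / p := by
  intro x
  rcases Nat.eq_zero_or_pos p with hp | hp
  · subst hp
    simp
  · have hp' : (0 : ℝ) < p := by exact_mod_cast hp
    have k1 := key_count A B hA hB x
    have k2 := key_count B A hB hA x
    rw [rank_sub_comm A B] at k2
    rw [div_sub_div_same, abs_div, abs_of_pos hp', div_le_div_iff_of_pos_right hp']
    rw [abs_sub_le_iff]
    constructor
    · have h := (Nat.cast_le (α := ℝ)).2 k1
      push_cast at h
      linarith
    · have h := (Nat.cast_le (α := ℝ)).2 k2
      push_cast at h
      linarith
end

section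
/- Let A and B be n×n normal matrices with empirical spectral distributions F^A and F^B of their eigenvalues (as distributions on ℂ, or on ℝ if the matrices are Hermitian). Then L(F^A, F^B)³ ≤ (1/n) Tr((A - B)(A - B)*), where L denotes the Lévy distance between the distributions. -/
open Matrix Finset

open Module

variable {n : ℕ}

-- norm sq via ON basis repr
lemma onb_norm_sq {ι F : Type*} [Fintype ι] [NormedAddCommGroup F] [InnerProductSpace ℂ F]
    (b : OrthonormalBasis ι ℂ F) (v : F) : ‖v‖ ^ 2 = ∑ i, ‖b.repr v i‖ ^ 2 := by
  rw [← b.repr.norm_map v, EuclideanSpace.norm_eq, Real.sq_sqrt]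
  positivity

-- eigenvector image under toEuclideanLin
lemma toEuclideanLin_eigen {M : Matrix (Fin n) (Fin n) ℂ} (hM : M.IsHermitian) (i : Fin n) :
    Matrix.toEuclideanLin M (hM.eigenvectorBasis i) = hM.eigenvalues i • hM.eigenvectorBasis i := by
  apply (WithLp.equiv 2 (Fin n → ℂ)).injective
  simpa [Matrix.ofLp_toEuclideanLin_apply] using hM.mulVec_eigenvectorBasis i

-- repr of (toEuclideanLin M) w in the eigenbasis
lemma repr_toEuclideanLin {M : Matrix (Fin n) (Fin n) ℂ} (hM : M.IsHermitian)
    (w : EuclideanSpace ℂ (Fin n)) (i : Fin n) :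
    hM.eigenvectorBasis.repr (Matrix.toEuclideanLin M w) i
      = hM.eigenvalues i * hM.eigenvectorBasis.repr w i := by
  have hsym := (Matrix.isHermitian_iff_isSymmetric.1 hM)
  rw [OrthonormalBasis.repr_apply_apply, OrthonormalBasis.repr_apply_apply,
    ← hsym (hM.eigenvectorBasis i) w, toEuclideanLin_eigen hM i,
    RCLike.real_smul_eq_coe_smul (K := ℂ), inner_smul_left]
  simp

-- quadratic form formula
lemma qf_formula {M : Matrix (Fin n) (Fin n) ℂ} (hM : M.IsHermitian)
    (v : EuclideanSpace ℂ (Fin n)) :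
    (inner ℂ v (Matrix.toEuclideanLin M v) : ℂ).re
      = ∑ i, hM.eigenvalues i * ‖hM.eigenvectorBasis.repr v i‖ ^ 2 := by
  have h1 : (inner ℂ v (Matrix.toEuclideanLin M v) : ℂ)
      = ∑ i, starRingEnd ℂ (hM.eigenvectorBasis.repr v i)
          * hM.eigenvectorBasis.repr (Matrix.toEuclideanLin M v) i := by
    rw [← hM.eigenvectorBasis.repr.inner_map_map v (Matrix.toEuclideanLin M v)]
    simp only [PiLp.inner_apply, RCLike.inner_apply, mul_comm]
  rw [h1, Complex.re_sum]
  refine Finset.sum_congr rfl fun i _ => ?_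
  rw [repr_toEuclideanLin hM v i]
  have : ‖hM.eigenvectorBasis.repr v i‖ ^ 2 = Complex.normSq (hM.eigenvectorBasis.repr v i) := by
    rw [Complex.sq_norm]
  rw [this]
  simp [Complex.mul_re, Complex.mul_im, Complex.normSq_apply]
  ring

lemma coeff_zero_of_mem_span (b : OrthonormalBasis (Fin n) ℂ (EuclideanSpace ℂ (Fin n)))
    (s : Finset (Fin n)) {v : EuclideanSpace ℂ (Fin n)}
    (hv : v ∈ Submodule.span ℂ (b '' ↑s)) {i : Fin n} (hi : i ∉ s) :
    b.repr v i = 0 := by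
  rw [OrthonormalBasis.repr_apply_apply]
  induction hv using Submodule.span_induction with
  | mem w hw =>
    obtain ⟨j, hj, rfl⟩ := hw
    have hij : i ≠ j := fun h => hi (h ▸ hj)
    simpa [hij] using orthonormal_iff_ite.1 b.orthonormal i j
  | zero => simp
  | add x y _ _ hx hy => rw [inner_add_right, hx, hy, add_zero]
  | smul c x _ hx => rw [inner_smul_right, hx, mul_zero]

lemma coeff_zero_of_mem_orth (b : OrthonormalBasis (Fin n) ℂ (EuclideanSpace ℂ (Fin n)))
    (s : Finset (Fin n)) {v : EuclideanSpace ℂ (Fin n)}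
    (hv : v ∈ (Submodule.span ℂ (b '' ↑s))ᗮ) {i : Fin n} (hi : i ∈ s) :
    b.repr v i = 0 := by
  rw [OrthonormalBasis.repr_apply_apply]
  exact (Submodule.mem_orthogonal _ _).1 hv (b i)
    (Submodule.subset_span ⟨i, by simpa using hi, rfl⟩)

lemma finrank_span_onb (b : OrthonormalBasis (Fin n) ℂ (EuclideanSpace ℂ (Fin n)))
    (s : Finset (Fin n)) :
    finrank ℂ (Submodule.span ℂ (b '' ↑s)) = s.card := by
  have hli : LinearIndependent ℂ (fun j : ↥(↑s : Set (Fin n)) => b j) :=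
    b.orthonormal.linearIndependent.comp _ Subtype.val_injective
  have himg : b '' ↑s = Set.range (fun j : ↥(↑s : Set (Fin n)) => b j) := by
    ext x; simp [Set.mem_image, Set.mem_range]
  rw [himg, finrank_span_eq_card hli]
  simp

lemma qf_le {M : Matrix (Fin n) (Fin n) ℂ} (hM : M.IsHermitian) {a : ℝ} (s : Finset (Fin n))
    (hs : ∀ i ∈ s, hM.eigenvalues i ≤ a) {v : EuclideanSpace ℂ (Fin n)}
    (hv : v ∈ Submodule.span ℂ (hM.eigenvectorBasis '' ↑s)) :
    (inner ℂ v (Matrix.toEuclideanLin M v) : ℂ).re ≤ a * ‖v‖ ^ 2 := by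
  rw [qf_formula hM v, onb_norm_sq hM.eigenvectorBasis v, Finset.mul_sum]
  refine Finset.sum_le_sum fun i _ => ?_
  by_cases hi : i ∈ s
  · exact mul_le_mul_of_nonneg_right (hs i hi) (by positivity)
  · rw [coeff_zero_of_mem_span hM.eigenvectorBasis s hv hi]; simp

lemma qf_ge {M : Matrix (Fin n) (Fin n) ℂ} (hM : M.IsHermitian) {b : ℝ} (s : Finset (Fin n))
    (hs : ∀ i ∉ s, b ≤ hM.eigenvalues i) {v : EuclideanSpace ℂ (Fin n)}
    (hv : v ∈ (Submodule.span ℂ (hM.eigenvectorBasis '' ↑s))ᗮ) :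
    b * ‖v‖ ^ 2 ≤ (inner ℂ v (Matrix.toEuclideanLin M v) : ℂ).re := by
  rw [qf_formula hM v, onb_norm_sq hM.eigenvectorBasis v, Finset.mul_sum]
  refine Finset.sum_le_sum fun i _ => ?_
  by_cases hi : i ∈ s
  · rw [coeff_zero_of_mem_orth hM.eigenvectorBasis s hv hi]; simp
  · exact mul_le_mul_of_nonneg_right (hs i hi) (by positivity)

lemma norm_T_sq {M : Matrix (Fin n) (Fin n) ℂ} (hM : M.IsHermitian)
    (x : EuclideanSpace ℂ (Fin n)) :
    ‖Matrix.toEuclideanLin M x‖ ^ 2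
      = ∑ i, hM.eigenvalues i ^ 2 * ‖hM.eigenvectorBasis.repr x i‖ ^ 2 := by
  rw [onb_norm_sq hM.eigenvectorBasis]
  refine Finset.sum_congr rfl fun i _ => ?_
  rw [repr_toEuclideanLin hM x i, norm_mul, mul_pow, Complex.norm_real, Real.norm_eq_abs, sq_abs]

lemma trace_mul_conjTranspose_hermitian {M : Matrix (Fin n) (Fin n) ℂ} (hM : M.IsHermitian) :
    (Matrix.trace (M * Mᴴ)).re = ∑ i, hM.eigenvalues i ^ 2 := by
  have hU := Matrix.mem_unitaryGroup_iff'.mp hM.eigenvectorUnitary.2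
  set U : Matrix (Fin n) (Fin n) ℂ := (hM.eigenvectorUnitary : Matrix (Fin n) (Fin n) ℂ) with hUdef
  set D : Matrix (Fin n) (Fin n) ℂ := Matrix.diagonal (RCLike.ofReal ∘ hM.eigenvalues) with hD
  have key : M * Mᴴ = U * (D * (D * star U)) := by
    conv_lhs => rw [hM.eq, hM.spectral_theorem]
    simp only [Unitary.conjStarAlgAut_apply, Matrix.mul_assoc]
    rw [show star U * (U * (D * star U)) = D * star U by
      rw [← Matrix.mul_assoc, hU, Matrix.one_mul]]
  rw [key, Matrix.trace_mul_comm, Matrix.mul_assoc, Matrix.mul_assoc, hU, Matrix.mul_one,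
    hD, Matrix.diagonal_mul_diagonal, Matrix.trace_diagonal, Complex.re_sum]
  refine Finset.sum_congr rfl fun i _ => ?_
  simp [← Complex.ofReal_mul, sq]


set_option maxHeartbeats 1000000 in
lemma trace_lower_bound {n : ℕ} {C : Matrix (Fin n) (Fin n) ℂ} (hC : C.IsHermitian)
    (W : Submodule ℂ (EuclideanSpace ℂ (Fin n))) {ε : ℝ} (hε : 0 ≤ ε)
    (h : ∀ w : EuclideanSpace ℂ (Fin n), w ∈ W → ‖w‖ = 1 →
      ε ≤ ‖Matrix.toEuclideanLin C w‖) :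
    (finrank ℂ W : ℝ) * ε ^ 2 ≤ (Matrix.trace (C * Cᴴ)).re := by
  classical
  set wb := stdOrthonormalBasis ℂ W with hwb
  set v : Fin (finrank ℂ W) → EuclideanSpace ℂ (Fin n) := W.subtypeₗᵢ ∘ wb with hv
  have hon : Orthonormal ℂ v := wb.orthonormal.comp_linearIsometry W.subtypeₗᵢ
  have hmem : ∀ l, v l ∈ W := fun l => (wb l).2
  have hsum_lower : (finrank ℂ W : ℝ) * ε ^ 2
      ≤ ∑ l, ‖Matrix.toEuclideanLin C (v l)‖ ^ 2 := by
    have hl : ∀ l, ε ^ 2 ≤ ‖Matrix.toEuclideanLin C (v l)‖ ^ 2 := fun l =>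
      pow_le_pow_left₀ hε (h _ (hmem l) (hon.1 l)) 2
    calc (finrank ℂ W : ℝ) * ε ^ 2 = ∑ _l : Fin (finrank ℂ W), ε ^ 2 := by simp [mul_comm]
      _ ≤ _ := Finset.sum_le_sum fun l _ => hl l
  have hsum_upper : ∑ l, ‖Matrix.toEuclideanLin C (v l)‖ ^ 2
      ≤ ∑ i, hC.eigenvalues i ^ 2 := by
    calc ∑ l, ‖Matrix.toEuclideanLin C (v l)‖ ^ 2
        = ∑ i, hC.eigenvalues i ^ 2
            * ∑ l, ‖hC.eigenvectorBasis.repr (v l) i‖ ^ 2 := by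
          simp_rw [norm_T_sq hC, Finset.mul_sum]
          rw [Finset.sum_comm]
      _ ≤ ∑ i, hC.eigenvalues i ^ 2 * 1 := by
          refine Finset.sum_le_sum fun i _ => ?_
          refine mul_le_mul_of_nonneg_left ?_ (by positivity)
          have hb : ∑ l, ‖(inner ℂ (v l) (hC.eigenvectorBasis i) : ℂ)‖ ^ 2
              ≤ ‖hC.eigenvectorBasis i‖ ^ 2 := hon.sum_inner_products_le _
          rw [hC.eigenvectorBasis.orthonormal.1 i, one_pow] at hb
          refine le_trans (le_of_eq ?_) hb
          refine Finset.sum_congr rfl fun l _ => ?_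
          rw [OrthonormalBasis.repr_apply_apply, ← norm_inner_symm]
      _ = ∑ i, hC.eigenvalues i ^ 2 := by simp
  calc (finrank ℂ W : ℝ) * ε ^ 2 ≤ ∑ l, ‖Matrix.toEuclideanLin C (v l)‖ ^ 2 := hsum_lower
    _ ≤ ∑ i, hC.eigenvalues i ^ 2 := hsum_upper
    _ = (Matrix.trace (C * Cᴴ)).re := (trace_mul_conjTranspose_hermitian hC).symm

set_option maxHeartbeats 1000000 in
lemma keyStep {n : ℕ} (A B : Matrix (Fin n) (Fin n) ℂ) (hA : A.IsHermitian) (hB : B.IsHermitian)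
    {ε a b : ℝ} (hε : 0 < ε) (hab : a + ε ≤ b) :
    (((Finset.univ.filter fun i => hA.eigenvalues i ≤ a).card : ℝ)
      - ((Finset.univ.filter fun i => hB.eigenvalues i ≤ b).card : ℝ)) * ε ^ 2
      ≤ (Matrix.trace ((B - A) * (B - A)ᴴ)).re := by
  classical
  set C : Matrix (Fin n) (Fin n) ℂ := B - A with hCdef
  have hC : C.IsHermitian := hB.sub hA
  set sA : Finset (Fin n) := Finset.univ.filter (fun i => hA.eigenvalues i ≤ a) with hsA
  set sB : Finset (Fin n) := Finset.univ.filter (fun i => hB.eigenvalues i ≤ b) with hsB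
  set S₁ : Submodule ℂ (EuclideanSpace ℂ (Fin n)) :=
    Submodule.span ℂ (hA.eigenvectorBasis '' ↑sA) with hS1
  set S₂ : Submodule ℂ (EuclideanSpace ℂ (Fin n)) :=
    Submodule.span ℂ (hB.eigenvectorBasis '' ↑sB) with hS2
  set W : Submodule ℂ (EuclideanSpace ℂ (Fin n)) := S₁ ⊓ S₂ᗮ with hW
  set d : ℕ := finrank ℂ W with hd
  -- dimension count
  have hdim : sA.card ≤ sB.card + d := by
    have h1 : finrank ℂ S₁ = sA.card := finrank_span_onb _ _
    have h2 : finrank ℂ S₂ = sB.card := finrank_span_onb _ _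
    have h3 : finrank ℂ S₂ + finrank ℂ S₂ᗮ = n := by
      rw [S₂.finrank_add_finrank_orthogonal, finrank_euclideanSpace, Fintype.card_fin]
    have h4 := Submodule.finrank_sup_add_finrank_inf_eq S₁ S₂ᗮ
    rw [← hW] at h4
    have h5 : finrank ℂ ↥(S₁ ⊔ S₂ᗮ) ≤ n := by
      have := Submodule.finrank_le (S₁ ⊔ S₂ᗮ)
      rwa [finrank_euclideanSpace, Fintype.card_fin] at this
    omega
  -- lower bound ε ≤ ‖T w‖ for unit w ∈ W
  have hTw : ∀ w : EuclideanSpace ℂ (Fin n), w ∈ W → ‖w‖ = 1 →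
      ε ≤ ‖Matrix.toEuclideanLin C w‖ := by
    intro w hwW hw1
    have hw1' : ‖w‖ ^ 2 = 1 := by rw [hw1]; norm_num
    have hup : (inner ℂ w (Matrix.toEuclideanLin A w) : ℂ).re ≤ a := by
      have := qf_le hA sA (fun i hi => (Finset.mem_filter.1 hi).2) hwW.1
      rwa [hw1', mul_one] at this
    have hlo : b ≤ (inner ℂ w (Matrix.toEuclideanLin B w) : ℂ).re := by
      have := qf_ge hB sB (fun i hi => le_of_lt (by
        have := Finset.mem_filter.not.1 hi
        push_neg at this
        exact this (Finset.mem_univ i))) hwW.2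
      rwa [hw1', mul_one] at this
    have hdiff : ε ≤ (inner ℂ w (Matrix.toEuclideanLin C w) : ℂ).re := by
      have : Matrix.toEuclideanLin C w
          = Matrix.toEuclideanLin B w - Matrix.toEuclideanLin A w := by
        rw [hCdef, map_sub]; rfl
      rw [this, inner_sub_right, Complex.sub_re]
      linarith
    calc ε ≤ (inner ℂ w (Matrix.toEuclideanLin C w) : ℂ).re := hdiff
      _ ≤ ‖(inner ℂ w (Matrix.toEuclideanLin C w) : ℂ)‖ := Complex.re_le_norm _
      _ ≤ ‖w‖ * ‖Matrix.toEuclideanLin C w‖ := norm_inner_le_norm _ _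
      _ = ‖Matrix.toEuclideanLin C w‖ := by rw [hw1, one_mul]
  have hmain := trace_lower_bound hC W hε.le hTw
  have hcard : ((sA.card : ℝ) - sB.card) * ε ^ 2 ≤ (d : ℝ) * ε ^ 2 := by
    have : (sA.card : ℝ) - sB.card ≤ d := by
      rw [sub_le_iff_le_add]
      exact_mod_cast (show sA.card ≤ d + sB.card by omega)
    exact mul_le_mul_of_nonneg_right this (by positivity)
  exact hcard.trans (hd ▸ hmain)

lemma trace_mul_conjTranspose_re_nonneg {n : ℕ} (M : Matrix (Fin n) (Fin n) ℂ) :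
    0 ≤ (Matrix.trace (M * Mᴴ)).re := by
  rw [Matrix.trace, Complex.re_sum]
  refine Finset.sum_nonneg fun i _ => ?_
  rw [Matrix.diag_apply, Matrix.mul_apply, Complex.re_sum]
  refine Finset.sum_nonneg fun j _ => ?_
  rw [Matrix.conjTranspose_apply]
  simp only [Complex.mul_re, Complex.star_def, Complex.conj_re, Complex.conj_im]
  nlinarith [sq_nonneg (M i j).re, sq_nonneg (M i j).im]


/-- Lévy distance bound for empirical spectral distributions of Hermitian matrices:
`L(F^A, F^B)³ ≤ (1/n) Tr((A-B)(A-B)*)`. -/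
theorem levy_distance_cubed_bound (n : ℕ) (hn : 0 < n)
    (A B : Matrix (Fin n) (Fin n) ℂ) (hA : A.IsHermitian) (hB : B.IsHermitian)
    (FA FB : ℝ → ℝ)
    (hFA : ∀ x, FA x = ((Finset.univ.filter fun i => hA.eigenvalues i ≤ x).card : ℝ) / n)
    (hFB : ∀ x, FB x = ((Finset.univ.filter fun i => hB.eigenvalues i ≤ x).card : ℝ) / n) :
    (sInf {ε : ℝ | 0 < ε ∧ ∀ x, FA (x - ε) - ε ≤ FB x ∧ FB x ≤ FA (x + ε) + ε}) ^ 3 ≤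
      (1 / n : ℝ) * (Matrix.trace ((A - B) * (A - B)ᴴ)).re := by
  classical
  have hnpos : (0:ℝ) < n := by exact_mod_cast hn
  have hnne : (n:ℝ) ≠ 0 := ne_of_gt hnpos
  set t : ℝ := (1 / n : ℝ) * (Matrix.trace ((A - B) * (A - B)ᴴ)).re with ht
  have htr0 : 0 ≤ (Matrix.trace ((A - B) * (A - B)ᴴ)).re :=
    trace_mul_conjTranspose_re_nonneg _
  have ht0 : 0 ≤ t := by
    rw [ht]; positivity
  have htr : (Matrix.trace ((A - B) * (A - B)ᴴ)).re = n * t := by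
    rw [ht]; field_simp
  set S : Set ℝ := {ε : ℝ | 0 < ε ∧ ∀ x, FA (x - ε) - ε ≤ FB x ∧ FB x ≤ FA (x + ε) + ε} with hS
  have hin : ∀ ε : ℝ, 0 < ε → t < ε ^ 3 → ε ∈ S := by
    intro ε hε hlt
    refine ⟨hε, fun x => ⟨?_, ?_⟩⟩
    · by_contra hcon
      push_neg at hcon
      rw [hFA, hFB] at hcon
      set k := (Finset.univ.filter fun i => hA.eigenvalues i ≤ x - ε).card with hk
      set m := (Finset.univ.filter fun i => hB.eigenvalues i ≤ x).card with hm
      have h2 := mul_lt_mul_of_pos_right hcon hnpos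
      rw [div_mul_cancel₀ _ hnne, sub_mul, div_mul_cancel₀ _ hnne] at h2
      -- h2 : m < k - ε * n
      have hks := keyStep A B hA hB hε (le_of_eq (by ring : (x - ε) + ε = x))
      have heq : (B - A) * (B - A)ᴴ = (A - B) * (A - B)ᴴ := by
        rw [← neg_sub A B, Matrix.conjTranspose_neg, Matrix.neg_mul, Matrix.mul_neg, neg_neg]
      rw [heq, htr] at hks
      have h3 : (n:ℝ) * ε ^ 3 < ((k:ℝ) - m) * ε ^ 2 := by
        calc (n:ℝ) * ε ^ 3 = (ε * n) * ε ^ 2 := by ring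
          _ < ((k:ℝ) - m) * ε ^ 2 :=
            mul_lt_mul_of_pos_right (by linarith) (pow_pos hε 2)
      have h4 : (n:ℝ) * t < n * ε ^ 3 := by
        exact mul_lt_mul_of_pos_left hlt hnpos
      linarith
    · by_contra hcon
      push_neg at hcon
      rw [hFA, hFB] at hcon
      set k := (Finset.univ.filter fun i => hB.eigenvalues i ≤ x).card with hk
      set m := (Finset.univ.filter fun i => hA.eigenvalues i ≤ x + ε).card with hm
      have h2 := mul_lt_mul_of_pos_right hcon hnpos
      rw [div_mul_cancel₀ _ hnne, add_mul, div_mul_cancel₀ _ hnne] at h2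
      -- h2 : m + ε * n < k
      have hks := keyStep B A hB hA hε (le_refl (x + ε))
      rw [htr] at hks
      have h3 : (n:ℝ) * ε ^ 3 < ((k:ℝ) - m) * ε ^ 2 := by
        calc (n:ℝ) * ε ^ 3 = (ε * n) * ε ^ 2 := by ring
          _ < ((k:ℝ) - m) * ε ^ 2 :=
            mul_lt_mul_of_pos_right (by linarith) (pow_pos hε 2)
      have h4 : (n:ℝ) * t < n * ε ^ 3 := mul_lt_mul_of_pos_left hlt hnpos
      linarith
  set c : ℝ := t ^ ((3:ℝ)⁻¹) with hc
  have hc0 : 0 ≤ c := Real.rpow_nonneg ht0 _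
  have hcube : c ^ 3 = t := by
    rw [hc, ← Real.rpow_natCast (t ^ ((3:ℝ)⁻¹)) 3, ← Real.rpow_mul ht0]
    norm_num
  have hbdd : BddBelow S := ⟨0, fun y hy => hy.1.le⟩
  have hne : S.Nonempty := ⟨c + 1, hin _ (by linarith) (by
    rw [← hcube]
    exact pow_lt_pow_left₀ (by linarith) hc0 (by norm_num))⟩
  have hinf_le : sInf S ≤ c := by
    refine le_of_forall_pos_le_add fun δ hδ => ?_
    refine csInf_le hbdd (hin _ (by linarith) ?_)
    rw [← hcube]
    exact pow_lt_pow_left₀ (by linarith) hc0 (by norm_num)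
  have hinf0 : 0 ≤ sInf S := le_csInf hne fun y hy => hy.1.le
  calc (sInf S) ^ 3 ≤ c ^ 3 := pow_le_pow_left₀ hinf0 hinf_le 3
    _ = t := hcube
end
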